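/- Let γ, κ be real constants with γ ≠ −1/2, and set α = −2γ, β = −1 − 2γ and μ = 1. Then for arbitrary twice continuously differentiable functions w, A, B : ℝ → ℝ, the function u(x,t) = w(t)·cosh(x + A(t)) + B(t)·sinh(x + A(t)) − κ/(1 + 2γ) solves equation (1) at every point (x,t) ∈ ℝ². -/

import Mathlib

private lemma hasDerivAt_cs (a b k e x : ℝ) :
    HasDerivAt (fun y => a * Real.cosh (y + e) + b * Real.sinh (y + e) - k)
      (b * Real.cosh (x + e) + a * Real.sinh (x + e)) x := by
  have h : HasDerivAt (fun y : ℝ => y + e) 1 x := (hasDerivAt_id x).add_const e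
  have h3 := ((h.cosh.const_mul a).add (h.sinh.const_mul b)).sub_const k
  exact h3.congr_deriv (by ring)

private lemma deriv_cs (a b k e : ℝ) :
    deriv (fun y => a * Real.cosh (y + e) + b * Real.sinh (y + e) - k)
      = fun y => b * Real.cosh (y + e) + a * Real.sinh (y + e) - 0 := by
  funext y
  rw [(hasDerivAt_cs a b k e y).deriv]; ring

private lemma id2 (f : ℝ → ℝ) : iteratedDeriv 2 f = deriv (deriv f) := by
  rw [show (2:ℕ) = 1 + 1 from rfl, iteratedDeriv_succ, iteratedDeriv_one]

private lemma id3 (f : ℝ → ℝ) : iteratedDeriv 3 f = deriv (deriv (deriv f)) := by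
  rw [show (3:ℕ) = 2 + 1 from rfl, iteratedDeriv_succ, id2]

private lemma id4 (f : ℝ → ℝ) : iteratedDeriv 4 f = deriv (deriv (deriv (deriv f))) := by
  rw [show (4:ℕ) = 3 + 1 from rfl, iteratedDeriv_succ, id3]

private lemma iteratedDeriv2_cs (a b k e x : ℝ) :
    iteratedDeriv 2 (fun y => a * Real.cosh (y + e) + b * Real.sinh (y + e) - k) x
      = a * Real.cosh (x + e) + b * Real.sinh (x + e) := by
  rw [id2, deriv_cs, deriv_cs]; simp

private lemma iteratedDeriv3_cs (a b k e x : ℝ) :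
    iteratedDeriv 3 (fun y => a * Real.cosh (y + e) + b * Real.sinh (y + e) - k) x
      = b * Real.cosh (x + e) + a * Real.sinh (x + e) := by
  rw [id3, deriv_cs, deriv_cs, deriv_cs]; simp

private lemma iteratedDeriv4_cs (a b k e x : ℝ) :
    iteratedDeriv 4 (fun y => a * Real.cosh (y + e) + b * Real.sinh (y + e) - k) x
      = a * Real.cosh (x + e) + b * Real.sinh (x + e) := by
  rw [id4, deriv_cs, deriv_cs, deriv_cs, deriv_cs]; simp

/-- `u` solves equation (1), the nonlinear fourth order PDE
`u_tt = (κ u + γ u²)_xx + u u_xxxx + μ u_xxtt + α u_x u_xxx + β (u_xx)²`,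
at the point `(x, t)`. -/
noncomputable def SolvesEq1 (α β γ κ μ : ℝ) (u : ℝ → ℝ → ℝ) (x t : ℝ) : Prop :=
  iteratedDeriv 2 (fun s => u x s) t =
    iteratedDeriv 2 (fun y => κ * u y t + γ * (u y t) ^ 2) x
    + u x t * iteratedDeriv 4 (fun y => u y t) x
    + μ * iteratedDeriv 2 (fun y => iteratedDeriv 2 (fun s => u y s) t) x
    + α * deriv (fun y => u y t) x * iteratedDeriv 3 (fun y => u y t) x
    + β * (iteratedDeriv 2 (fun y => u y t) x) ^ 2

theorem singular_nonclassical_case_b_solves_eq1 (γ κ : ℝ) (hγ : γ ≠ -1 / 2)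
    (w A B : ℝ → ℝ)
    (hw : ContDiff ℝ 2 w) (hA : ContDiff ℝ 2 A) (hB : ContDiff ℝ 2 B) :
    ∀ x t : ℝ,
      SolvesEq1 (-2 * γ) (-1 - 2 * γ) γ κ 1
        (fun x t =>
          w t * Real.cosh (x + A t) + B t * Real.sinh (x + A t)
            - κ / (1 + 2 * γ)) x t := by
  intro x t
  have h2γ : (1 : ℝ) + 2 * γ ≠ 0 := fun h => hγ (by linarith)
  have hw1 : Differentiable ℝ w := hw.differentiable (by norm_num)
  have hA1 : Differentiable ℝ A := hA.differentiable (by norm_num)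
  have hB1 : Differentiable ℝ B := hB.differentiable (by norm_num)
  have hw2 : Differentiable ℝ (deriv w) :=
    ((contDiff_succ_iff_deriv.mp (show ContDiff ℝ ((1:ℕ)+1) w from by
      exact_mod_cast hw)).2.2).differentiable (by norm_num)
  have hA2 : Differentiable ℝ (deriv A) :=
    ((contDiff_succ_iff_deriv.mp (show ContDiff ℝ ((1:ℕ)+1) A from by
      exact_mod_cast hA)).2.2).differentiable (by norm_num)
  have hB2 : Differentiable ℝ (deriv B) :=
    ((contDiff_succ_iff_deriv.mp (show ContDiff ℝ ((1:ℕ)+1) B from by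
      exact_mod_cast hB)).2.2).differentiable (by norm_num)
  set c : ℝ := κ / (1 + 2 * γ) with hc
  unfold SolvesEq1
  beta_reduce
  -- t-direction first derivative
  have hg : ∀ (y : ℝ) (s : ℝ),
      HasDerivAt (fun s => w s * Real.cosh (y + A s) + B s * Real.sinh (y + A s) - c)
        ((deriv w s + B s * deriv A s) * Real.cosh (y + A s)
          + (w s * deriv A s + deriv B s) * Real.sinh (y + A s)) s := by
    intro y s
    have hAy : HasDerivAt (fun s => y + A s) (deriv A s) s := ((hA1 s).hasDerivAt).const_add y
    have h3 := (((hw1 s).hasDerivAt.mul hAy.cosh).add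
      ((hB1 s).hasDerivAt.mul hAy.sinh)).sub_const c
    exact h3.congr_deriv (by ring)
  have dg : ∀ y : ℝ,
      deriv (fun s => w s * Real.cosh (y + A s) + B s * Real.sinh (y + A s) - c)
        = fun s => (deriv w s + B s * deriv A s) * Real.cosh (y + A s)
          + (w s * deriv A s + deriv B s) * Real.sinh (y + A s) :=
    fun y => funext fun s => (hg y s).deriv
  -- t-direction second derivative
  have htt : ∀ y : ℝ,
      iteratedDeriv 2 (fun s => w s * Real.cosh (y + A s) + B s * Real.sinh (y + A s) - c) t
        = (deriv (deriv w) t + deriv B t * deriv A t + B t * deriv (deriv A) t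
            + (w t * deriv A t + deriv B t) * deriv A t) * Real.cosh (y + A t)
          + ((deriv w t + B t * deriv A t) * deriv A t + deriv w t * deriv A t
            + w t * deriv (deriv A) t + deriv (deriv B) t) * Real.sinh (y + A t) := by
    intro y
    rw [id2, dg y]
    have hAy : HasDerivAt (fun s => y + A s) (deriv A t) t := ((hA1 t).hasDerivAt).const_add y
    have p1 : HasDerivAt (fun s => deriv w s + B s * deriv A s)
        (deriv (deriv w) t + (deriv B t * deriv A t + B t * deriv (deriv A) t)) t :=
      (hw2 t).hasDerivAt.add ((hB1 t).hasDerivAt.mul (hA2 t).hasDerivAt)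
    have p2 : HasDerivAt (fun s => w s * deriv A s + deriv B s)
        ((deriv w t * deriv A t + w t * deriv (deriv A) t) + deriv (deriv B) t) t :=
      ((hw1 t).hasDerivAt.mul (hA2 t).hasDerivAt).add (hB2 t).hasDerivAt
    have h3 : HasDerivAt (fun s => (deriv w s + B s * deriv A s) * Real.cosh (y + A s)
          + (w s * deriv A s + deriv B s) * Real.sinh (y + A s))
        ((deriv (deriv w) t + (deriv B t * deriv A t + B t * deriv (deriv A) t))
            * Real.cosh (y + A t)
          + (deriv w t + B t * deriv A t) * (Real.sinh (y + A t) * deriv A t)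
          + ((deriv w t * deriv A t + w t * deriv (deriv A) t + deriv (deriv B) t)
              * Real.sinh (y + A t)
            + (w t * deriv A t + deriv B t) * (Real.cosh (y + A t) * deriv A t))) t := by
      exact (p1.mul hAy.cosh).add (p2.mul hAy.sinh)
    rw [h3.deriv]
    ring
  have httx := htt x
  -- u_xxtt
  have hxxtt : iteratedDeriv 2
      (fun y => iteratedDeriv 2
        (fun s => w s * Real.cosh (y + A s) + B s * Real.sinh (y + A s) - c) t) x
      = (deriv (deriv w) t + deriv B t * deriv A t + B t * deriv (deriv A) t
            + (w t * deriv A t + deriv B t) * deriv A t) * Real.cosh (x + A t)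
          + ((deriv w t + B t * deriv A t) * deriv A t + deriv w t * deriv A t
            + w t * deriv (deriv A) t + deriv (deriv B) t) * Real.sinh (x + A t) := by
    have hfun : (fun y => iteratedDeriv 2
        (fun s => w s * Real.cosh (y + A s) + B s * Real.sinh (y + A s) - c) t)
        = fun y => (deriv (deriv w) t + deriv B t * deriv A t + B t * deriv (deriv A) t
            + (w t * deriv A t + deriv B t) * deriv A t) * Real.cosh (y + A t)
          + ((deriv w t + B t * deriv A t) * deriv A t + deriv w t * deriv A t
            + w t * deriv (deriv A) t + deriv (deriv B) t) * Real.sinh (y + A t) - 0 :=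
      funext fun y => by rw [htt y]; ring
    rw [hfun, iteratedDeriv2_cs]
  -- x-direction slice derivatives
  have hslice : ∀ y : ℝ,
      HasDerivAt (fun y => w t * Real.cosh (y + A t) + B t * Real.sinh (y + A t) - c)
        (B t * Real.cosh (y + A t) + w t * Real.sinh (y + A t)) y :=
    fun y => hasDerivAt_cs (w t) (B t) c (A t) y
  have e1x : deriv (fun y => w t * Real.cosh (y + A t) + B t * Real.sinh (y + A t) - c) x
      = B t * Real.cosh (x + A t) + w t * Real.sinh (x + A t) := (hslice x).deriv
  have e2x := iteratedDeriv2_cs (w t) (B t) c (A t) x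
  have e3x := iteratedDeriv3_cs (w t) (B t) c (A t) x
  have e4x := iteratedDeriv4_cs (w t) (B t) c (A t) x
  -- the nonlinear term (κ u + γ u²)
  have hF : ∀ y : ℝ, HasDerivAt
      (fun y => κ * (w t * Real.cosh (y + A t) + B t * Real.sinh (y + A t) - c)
        + γ * (w t * Real.cosh (y + A t) + B t * Real.sinh (y + A t) - c) ^ 2)
      (κ * (B t * Real.cosh (y + A t) + w t * Real.sinh (y + A t))
        + γ * (2 * ((w t * Real.cosh (y + A t) + B t * Real.sinh (y + A t) - c)
            * (B t * Real.cosh (y + A t) + w t * Real.sinh (y + A t))))) y := by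
    intro y
    have h3 := ((hslice y).const_mul κ).add (((hslice y).pow 2).const_mul γ)
    exact h3.congr_deriv (by push_cast; ring)
  have dF : deriv (fun y => κ * (w t * Real.cosh (y + A t) + B t * Real.sinh (y + A t) - c)
        + γ * (w t * Real.cosh (y + A t) + B t * Real.sinh (y + A t) - c) ^ 2)
      = fun y => κ * (B t * Real.cosh (y + A t) + w t * Real.sinh (y + A t))
        + γ * (2 * ((w t * Real.cosh (y + A t) + B t * Real.sinh (y + A t) - c)
            * (B t * Real.cosh (y + A t) + w t * Real.sinh (y + A t)))) :=
    funext fun y => (hF y).deriv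
  have hslice2 : HasDerivAt (fun y => B t * Real.cosh (y + A t) + w t * Real.sinh (y + A t))
      (w t * Real.cosh (x + A t) + B t * Real.sinh (x + A t)) x := by
    have := hasDerivAt_cs (B t) (w t) 0 (A t) x
    simpa using this
  have hG : HasDerivAt (fun y => κ * (B t * Real.cosh (y + A t) + w t * Real.sinh (y + A t))
        + γ * (2 * ((w t * Real.cosh (y + A t) + B t * Real.sinh (y + A t) - c)
            * (B t * Real.cosh (y + A t) + w t * Real.sinh (y + A t)))))
      (κ * (w t * Real.cosh (x + A t) + B t * Real.sinh (x + A t))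
        + γ * (2 * ((B t * Real.cosh (x + A t) + w t * Real.sinh (x + A t))
              * (B t * Real.cosh (x + A t) + w t * Real.sinh (x + A t))
            + (w t * Real.cosh (x + A t) + B t * Real.sinh (x + A t) - c)
              * (w t * Real.cosh (x + A t) + B t * Real.sinh (x + A t))))) x := by
    have h3 := (hslice2.const_mul κ).add
      ((((hslice x).mul hslice2).const_mul 2).const_mul γ)
    exact h3
  have eF : iteratedDeriv 2
      (fun y => κ * (w t * Real.cosh (y + A t) + B t * Real.sinh (y + A t) - c)
        + γ * (w t * Real.cosh (y + A t) + B t * Real.sinh (y + A t) - c) ^ 2) x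
      = κ * (w t * Real.cosh (x + A t) + B t * Real.sinh (x + A t))
        + γ * (2 * ((B t * Real.cosh (x + A t) + w t * Real.sinh (x + A t))
              * (B t * Real.cosh (x + A t) + w t * Real.sinh (x + A t))
            + (w t * Real.cosh (x + A t) + B t * Real.sinh (x + A t) - c)
              * (w t * Real.cosh (x + A t) + B t * Real.sinh (x + A t)))) := by
    rw [id2, dF, hG.deriv]
  rw [httx, hxxtt, eF, e1x, e2x, e3x, e4x]
  have hck : (1 + 2 * γ) * c = κ := by
    rw [hc]; field_simp
  linear_combination (w t * Real.cosh (x + A t) + B t * Real.sinh (x + A t)) * hck
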